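/- Let B ∈ ℝ^{n×n} satisfy (1/2)hᵀBh + t‖h‖² ≥ λ₁‖h‖² for all h and ‖B + tI‖ ≤ λ₂ for constants λ₁, λ₂ > 0 and some t ≥ 0. Suppose p solves (B + tI)p = −g + r with ‖r‖ ≤ λ₁‖g‖/(2(λ₁+λ₂)), and set s = min{Δ, ‖p‖}·p/‖p‖. Then for m(s) = ⟨g,s⟩ + (1/2)⟨s,Bs⟩ one has m(0) − m(s) ≥ (λ₁/(2λ₂))‖g‖ min{Δ, ((λ₁+2λ₂)/(2λ₂(λ₁+λ₂)))‖g‖}. -/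

import Mathlib

open scoped RealInnerProductSpace

set_option maxHeartbeats 1000000 in
/-- Let B satisfy (1/2)hᵀBh + t‖h‖² ≥ λ₁‖h‖² for all h and
‖B + tI‖ ≤ λ₂, with λ₁, λ₂ > 0 and t ≥ 0, B positive semidefinite. Suppose p
solves (B + tI)p = −g + r with ‖r‖ ≤ λ₁‖g‖/(2(λ₁+λ₂)), and set
s = min{Δ, ‖p‖}·p/‖p‖. Then for m(s) = ⟨g,s⟩ + (1/2)⟨s,Bs⟩ one has
m(0) − m(s) ≥ (λ₁/(2λ₂))‖g‖ min{Δ, ((λ₁+2λ₂)/(2λ₂(λ₁+λ₂)))‖g‖}. -/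
theorem regularized_newton_model_decrease {n : ℕ}
    (g : EuclideanSpace ℝ (Fin n)) (hg : g ≠ 0)
    (B : EuclideanSpace ℝ (Fin n) →L[ℝ] EuclideanSpace ℝ (Fin n))
    (hBpsd : ∀ h : EuclideanSpace ℝ (Fin n), 0 ≤ ⟪h, B h⟫)
    (t : ℝ) (ht : 0 ≤ t)
    (lam₁ lam₂ : ℝ) (hlam₁ : 0 < lam₁) (hlam₂ : 0 < lam₂)
    (h1 : ∀ h : EuclideanSpace ℝ (Fin n),
      lam₁ * ‖h‖ ^ 2 ≤ (1 / 2) * ⟪h, B h⟫ + t * ‖h‖ ^ 2)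
    (h2 : ‖B + t • ContinuousLinearMap.id ℝ (EuclideanSpace ℝ (Fin n))‖ ≤ lam₂)
    (Δ : ℝ) (hΔ : 0 < Δ)
    (p r : EuclideanSpace ℝ (Fin n))
    (hp : B p + t • p = -g + r)
    (hr : ‖r‖ ≤ lam₁ * ‖g‖ / (2 * (lam₁ + lam₂)))
    (m : EuclideanSpace ℝ (Fin n) → ℝ)
    (hm : ∀ s, m s = ⟪g, s⟫ + (1 / 2) * ⟪s, B s⟫)
    (s : EuclideanSpace ℝ (Fin n)) (hs : s = min Δ ‖p‖ • ‖p‖⁻¹ • p) :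
    (lam₁ / (2 * lam₂)) * ‖g‖ *
        min Δ ((lam₁ + 2 * lam₂) / (2 * lam₂ * (lam₁ + lam₂)) * ‖g‖) ≤
      m 0 - m s := by

  have hG : (0:ℝ) < ‖g‖ := norm_pos_iff.mpr hg
  have hApp : ‖g‖ - ‖r‖ ≤ lam₂ * ‖p‖ := by
    have h3 : ‖(B + t • ContinuousLinearMap.id ℝ (EuclideanSpace ℝ (Fin n))) p‖ ≤
        ‖B + t • ContinuousLinearMap.id ℝ (EuclideanSpace ℝ (Fin n))‖ * ‖p‖ :=
      (B + t • ContinuousLinearMap.id ℝ (EuclideanSpace ℝ (Fin n))).le_opNorm p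
    have h4 : (B + t • ContinuousLinearMap.id ℝ (EuclideanSpace ℝ (Fin n))) p = -g + r := by
      simpa using hp
    have h5 : ‖g‖ - ‖r‖ ≤ ‖-g + r‖ := by
      have := norm_sub_norm_le (-g) (-r)
      simpa [sub_neg_eq_add] using this
    have h6 := mul_le_mul_of_nonneg_right h2 (norm_nonneg p)
    rw [h4] at h3
    linarith
  have hr' : ‖r‖ * (2 * (lam₁ + lam₂)) ≤ lam₁ * ‖g‖ := (le_div_iff₀ (by positivity)).mp hr
  have hplb : (lam₁ + 2 * lam₂) / (2 * lam₂ * (lam₁ + lam₂)) * ‖g‖ ≤ ‖p‖ := by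
    rw [div_mul_eq_mul_div, div_le_iff₀ (by positivity)]
    nlinarith [mul_le_mul_of_nonneg_left hApp (show (0:ℝ) ≤ 2 * (lam₁ + lam₂) by positivity)]
  have hppos : (0:ℝ) < ‖p‖ := lt_of_lt_of_le (by positivity) hplb
  set N := ‖p‖ with hN
  set τ := min Δ N / N with hτdef
  have hτpos : 0 < τ := div_pos (lt_min hΔ hppos) hppos
  have hτle : τ ≤ 1 := div_le_one_of_le₀ (min_le_right _ _) hppos.le
  have hmin : min Δ N = τ * N := (div_mul_cancel₀ _ hppos.ne').symm
  have hs' : s = τ • p := by rw [hs, smul_smul, hτdef, div_eq_mul_inv]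
  have hms : m s = τ * ⟪g, p⟫ + (1 / 2) * (τ ^ 2 * ⟪p, B p⟫) := by
    rw [hm, hs', map_smul, real_inner_smul_right, real_inner_smul_left,
      real_inner_smul_right]
    ring
  have hm0 : m 0 = 0 := by simp [hm]
  have hinner : ⟪g, p⟫ = -⟪p, B p⟫ - t * N ^ 2 + ⟪p, r⟫ := by
    have hcongr := congrArg (fun v => (inner ℝ p v : ℝ)) hp
    simp only [inner_add_right, inner_smul_right, inner_neg_right,
      real_inner_self_eq_norm_sq] at hcongr
    have hsym : ⟪p, g⟫ = ⟪g, p⟫ := real_inner_comm g p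
    rw [← hN] at hcongr
    linarith
  have hCS : ⟪p, r⟫ ≤ N * ‖r‖ := real_inner_le_norm p r
  have hQ := hBpsd p
  have h1p := h1 p
  rw [← hN] at h1p
  have key : min Δ N * (lam₁ * N - ‖r‖) ≤ m 0 - m s := by
    rw [hm0, hms, hinner, hmin]
    nlinarith [mul_le_mul_of_nonneg_left hCS hτpos.le,
      mul_le_mul_of_nonneg_left h1p hτpos.le,
      mul_nonneg (mul_nonneg hτpos.le (sub_nonneg.mpr hτle)) hQ]
  have hfac : lam₁ / (2 * lam₂) * ‖g‖ ≤ lam₁ * N - ‖r‖ := by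
    rw [div_mul_eq_mul_div, div_le_iff₀ (by positivity)]
    nlinarith [mul_le_mul_of_nonneg_left hApp hlam₁.le]
  have hminle : min Δ ((lam₁ + 2 * lam₂) / (2 * lam₂ * (lam₁ + lam₂)) * ‖g‖) ≤ min Δ N :=
    min_le_min le_rfl hplb
  have hminpos : 0 < min Δ ((lam₁ + 2 * lam₂) / (2 * lam₂ * (lam₁ + lam₂)) * ‖g‖) :=
    lt_min hΔ (by positivity)
  calc lam₁ / (2 * lam₂) * ‖g‖ * min Δ ((lam₁ + 2 * lam₂) / (2 * lam₂ * (lam₁ + lam₂)) * ‖g‖)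
      ≤ (lam₁ * N - ‖r‖) * min Δ N :=
        mul_le_mul hfac hminle hminpos.le (le_trans (by positivity) hfac)
    _ ≤ m 0 - m s := by rw [mul_comm]; exact key
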